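/- Let V⁺ ⊆ 𝕋V be a subspace with dim V⁺ = dim V on which the hyperbolic pairing is positive definite (a fibrewise generalised metric). Then there exists a unique pair (g, b) of bilinear forms on V, with g symmetric and positive definite and b alternating, such that V⁺ = gr(g + b). Conversely, for any such pair (g, b), the hyperbolic pairing is positive definite on gr(g + b) and dim gr(g + b) = dim V. -/

import Mathlib

/-- The hyperbolic pairing on the double `𝕋V = V × V*`:
`⟨(v, α), (w, β)⟩ = α(w) + β(v)`. -/
noncomputable def hyp (V : Type*) [AddCommGroup V] [Module ℝ V] :
    LinearMap.BilinForm ℝ (V × Module.Dual ℝ V) :=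
  LinearMap.mk₂ ℝ (fun x y => x.2 y.1 + y.2 x.1)
    (fun x x' y => by
      simp only [Prod.fst_add, Prod.snd_add, LinearMap.add_apply, map_add]; ring)
    (fun c x y => by
      simp only [Prod.smul_fst, Prod.smul_snd, LinearMap.smul_apply, map_smul, smul_eq_mul]; ring)
    (fun x y y' => by
      simp only [Prod.fst_add, Prod.snd_add, LinearMap.add_apply, map_add]; ring)
    (fun c x y => by
      simp only [Prod.smul_fst, Prod.smul_snd, LinearMap.smul_apply, map_smul, smul_eq_mul]; ring)

set_option maxHeartbeats 1000000 in
/-- A subspace `V⁺ ⊆ 𝕋V` with `dim V⁺ = dim V` on which the hyperbolic pairing is positive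
definite is the graph `gr(g + b)` of a unique pair `(g, b)` with `g` symmetric positive definite
and `b` alternating; conversely every such graph is a fibrewise generalised metric. -/
theorem stmt0 (V : Type*) [AddCommGroup V] [Module ℝ V] [FiniteDimensional ℝ V] :
    (∀ W : Submodule ℝ (V × Module.Dual ℝ V),
        Module.finrank ℝ W = Module.finrank ℝ V →
        (∀ x ∈ W, x ≠ 0 → 0 < hyp V x x) →
        ∃! p : LinearMap.BilinForm ℝ V × LinearMap.BilinForm ℝ V,
          (∀ v w, p.1 v w = p.1 w v) ∧ (∀ v : V, v ≠ 0 → 0 < p.1 v v) ∧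
          (∀ v, p.2 v v = 0) ∧
          W = LinearMap.graph (p.1 + p.2)) ∧
    (∀ g b : LinearMap.BilinForm ℝ V,
        (∀ v w, g v w = g w v) → (∀ v : V, v ≠ 0 → 0 < g v v) → (∀ v, b v v = 0) →
        (∀ x ∈ LinearMap.graph (g + b), x ≠ 0 → 0 < hyp V x x) ∧
        Module.finrank ℝ (LinearMap.graph (g + b)) = Module.finrank ℝ V) := by
  have hyp_apply : ∀ x y : V × Module.Dual ℝ V, hyp V x y = x.2 y.1 + y.2 x.1 :=
    fun x y => rfl
  constructor
  · intro W hdim hpos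
    set p1 : W →ₗ[ℝ] V := (LinearMap.fst ℝ V (Module.Dual ℝ V)).comp W.subtype with hp1
    have hinj : Function.Injective p1 := by
      have key : ∀ x : W, p1 x = 0 → x = 0 := by
        intro x hx
        by_contra hx0
        have hne : (x : V × Module.Dual ℝ V) ≠ 0 := fun h => hx0 (Subtype.ext h)
        have hpos' := hpos x x.2 hne
        have h1 : (x : V × Module.Dual ℝ V).1 = 0 := hx
        rw [hyp_apply, h1, map_zero] at hpos'
        simp at hpos'
      intro x y hxy
      have hsub : p1 (x - y) = 0 := by
        have h := map_sub p1 x y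
        rw [h, hxy, sub_self]
      exact sub_eq_zero.mp (key _ hsub)
    obtain ⟨e, he_apply⟩ : ∃ e : W ≃ₗ[ℝ] V, ∀ x : W,
        e x = (x : V × Module.Dual ℝ V).1 := by
      have hsurj : Function.Surjective p1 :=
        (@LinearMap.injective_iff_surjective_of_finrank_eq_finrank ℝ W _ _ _ V _ _ _ _ hdim p1).mp hinj
      exact ⟨LinearEquiv.ofBijective p1 ⟨hinj, hsurj⟩, fun x => rfl⟩
    set f : LinearMap.BilinForm ℝ V :=
      ((LinearMap.snd ℝ V (Module.Dual ℝ V)).comp W.subtype).comp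
        (e.symm : V →ₗ[ℝ] W) with hf
    have hcoord : ∀ v : V, ((e.symm v : W) : V × Module.Dual ℝ V) = (v, f v) := by
      intro v
      have h1 : ((e.symm v : W) : V × Module.Dual ℝ V).1 = v := by
        rw [← he_apply (e.symm v), e.apply_symm_apply]
      exact Prod.ext h1 rfl
    have hgraph : W = LinearMap.graph f := by
      ext x
      rw [LinearMap.mem_graph_iff]
      constructor
      · intro hx
        have : e.symm ((⟨x, hx⟩ : W) : V × Module.Dual ℝ V).1 = ⟨x, hx⟩ := by
          rw [← he_apply ⟨x, hx⟩, e.symm_apply_apply]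
        have := congrArg (fun y : W => ((y : V × Module.Dual ℝ V)).2) this
        simpa [hf] using this.symm
      · intro hx
        have := hcoord x.1
        have hx' : x = ((e.symm x.1 : W) : V × Module.Dual ℝ V) := by
          rw [this, ← hx]
        rw [hx']
        exact (e.symm x.1).2
    have hfpos : ∀ v : V, v ≠ 0 → 0 < f v v := by
      intro v hv
      have hmem : (v, f v) ∈ W := by rw [hgraph, LinearMap.mem_graph_iff]
      have hne : ((v, f v) : V × Module.Dual ℝ V) ≠ 0 := by
        intro h
        exact hv (congrArg Prod.fst h)
      have := hpos _ hmem hne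
      rw [hyp_apply] at this
      simp only at this
      linarith
    refine ⟨((2:ℝ)⁻¹ • (f + f.flip), (2:ℝ)⁻¹ • (f - f.flip)), ⟨?_, ?_, ?_, ?_⟩, ?_⟩
    · intro v w
      simp [LinearMap.flip_apply]
      ring
    · intro v hv
      have := hfpos v hv
      simp [LinearMap.flip_apply]
      linarith
    · intro v
      simp [LinearMap.flip_apply]
    · rw [hgraph]
      congr 1
      ext v w
      simp [LinearMap.flip_apply]
      ring
    · rintro ⟨g', b'⟩ ⟨hsym, hpos', halt, hgr⟩
      have hanti : ∀ v w, b' v w = - b' w v := by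
        intro v w
        have := halt (v + w)
        simp only [map_add, LinearMap.add_apply] at this
        rw [halt v, halt w] at this
        linarith
      have heq : g' + b' = f := by
        ext v
        have hmem : (v, (g' + b') v) ∈ LinearMap.graph (g' + b') := by
          rw [LinearMap.mem_graph_iff]
        rw [← hgr, hgraph, LinearMap.mem_graph_iff] at hmem
        exact hmem.symm ▸ rfl
      have happ : ∀ v w, g' v w + b' v w = f v w := by
        intro v w
        have := LinearMap.congr_fun (LinearMap.congr_fun heq v) w
        simpa using this
      have hg' : ∀ v w, g' v w = (2:ℝ)⁻¹ * (f v w + f w v) := by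
        intro v w
        have h1 := happ v w
        have h2 := happ w v
        have h3 := hanti v w
        have h4 := hsym v w
        linarith
      refine Prod.ext ?_ ?_
      · ext v w
        simp only [LinearMap.smul_apply, LinearMap.add_apply, LinearMap.flip_apply,
          smul_eq_mul]
        rw [hg' v w]
        have h4 : f.flip v w = f w v := rfl
        rw [h4]
      · ext v w
        have h1 := happ v w
        have h2 := hg' v w
        have h3 := happ w v
        simp only [LinearMap.smul_apply, LinearMap.sub_apply, LinearMap.flip_apply,
          smul_eq_mul]
        have h4 : f.flip v w = f w v := rfl
        rw [h4]
        linarith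
  · intro g b hsym hpos halt
    constructor
    · intro x hx hx0
      rw [LinearMap.mem_graph_iff] at hx
      have hv : x.1 ≠ 0 := by
        intro h
        apply hx0
        have : x.2 = 0 := by rw [hx, h, map_zero]
        exact Prod.ext h this
      have := hpos x.1 hv
      rw [hyp_apply, hx]
      simp only [LinearMap.add_apply]
      rw [halt x.1]
      linarith
    · rw [LinearMap.graph_eq_range_prod]
      have hinj : Function.Injective (LinearMap.id.prod (g + b)) := by
        intro v w h
        exact congrArg Prod.fst h
      exact ((LinearEquiv.ofInjective _ hinj).finrank_eq).symm
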